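/- Let 𝔄 be a unital C*-algebra, ω a state on 𝔄, U a unitary in 𝔄, and s ∈ [0,1]. Then sU + (1-s)·1 lies in the Gelfand ideal of ω if and only if ω(U) = -1 and s = 1/2. -/
import Mathlib


open scoped ComplexOrder

/-- A state on a unital C*-algebra: a positive unital linear functional. -/
def IsState {A : Type*} [CStarAlgebra A] [NormedAlgebra ℂ A] [StarModule ℂ A]
    (φ : A →L[ℂ] ℂ) : Prop :=
  (∀ a : A, 0 ≤ φ (star a * a)) ∧ φ 1 = 1

section CleanContext

variable {A : Type*} [CStarAlgebra A]

/-- On selfadjoint elements a positive functional takes real values. -/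
lemma state_im_eq_zero (ω : A →L[ℂ] ℂ) (hpos : ∀ a : A, 0 ≤ ω (star a * a))
    (h1 : ω 1 = 1) (h : A) (hh : star h = h) : (ω h).im = 0 := by
  have e : star (h + 1) * (h + 1) = star h * h + h + h + 1 := by
    rw [star_add, star_one, hh]; noncomm_ring
  have p1 := (Complex.nonneg_iff.mp (hpos (h + 1))).2
  have p2 := (Complex.nonneg_iff.mp (hpos h)).2
  rw [e] at p1
  simp only [map_add, h1, Complex.add_im, Complex.one_im] at p1
  linarith

/-- A positive functional is star-preserving. -/
lemma state_star (ω : A →L[ℂ] ℂ) (hpos : ∀ a : A, 0 ≤ ω (star a * a))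
    (h1 : ω 1 = 1) (a : A) : ω (star a) = starRingEnd ℂ (ω a) := by
  have h1' : (ω (a + star a)).im = 0 :=
    state_im_eq_zero ω hpos h1 _ (by simp [add_comm])
  have h2' : (ω (Complex.I • (a - star a))).im = 0 := by
    refine state_im_eq_zero ω hpos h1 _ ?_
    rw [star_smul, star_sub, star_star, Complex.star_def, Complex.conj_I,
      neg_smul, smul_sub, smul_sub, neg_sub]
  have e1 : ω (a + star a) = ω a + ω (star a) := map_add ω _ _
  have e2 : ω (Complex.I • (a - star a)) = Complex.I * (ω a - ω (star a)) := by
    rw [ω.map_smul, map_sub]; rfl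
  rw [e1] at h1'
  rw [e2] at h2'
  simp only [Complex.add_im, Complex.mul_im, Complex.I_re, Complex.I_im,
    Complex.sub_re, Complex.sub_im, one_mul, zero_mul, add_zero] at h1' h2'
  apply Complex.ext <;> simp [Complex.conj_re, Complex.conj_im] <;> linarith

/-- Cauchy–Schwarz-type bound: `|ω U|² ≤ 1` for a unitary `U`. -/
lemma state_normsq_le (ω : A →L[ℂ] ℂ) (hpos : ∀ a : A, 0 ≤ ω (star a * a))
    (h1 : ω 1 = 1) (U : A) (hU₁ : star U * U = 1) :
    (ω U).re ^ 2 + (ω U).im ^ 2 ≤ 1 := by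
  set z : ℂ := ω U with hzdef
  have hstar : ω (star U) = starRingEnd ℂ z := state_star ω hpos h1 U
  have hp := hpos (U - z • 1)
  have e : star (U - z • 1) * (U - z • 1)
      = 1 - z • star U - (starRingEnd ℂ z) • U + (z * starRingEnd ℂ z) • 1 := by
    rw [star_sub, star_smul, star_one, sub_mul, mul_sub, mul_sub, hU₁, Complex.star_def]
    simp only [smul_mul_assoc, mul_smul_comm, smul_smul, one_mul, mul_one]
    abel
  rw [e] at hp
  have e2 : ω (1 - z • star U - (starRingEnd ℂ z) • U + (z * starRingEnd ℂ z) • 1)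
      = 1 - z * ω (star U) - starRingEnd ℂ z * ω U + (z * starRingEnd ℂ z) * ω 1 := by
    rw [map_add, map_sub, map_sub, ω.map_smul, ω.map_smul, ω.map_smul, h1]
    rfl
  rw [e2, hstar, h1, ← hzdef] at hp
  have h := (Complex.nonneg_iff.mp hp).1
  simp only [Complex.sub_re, Complex.add_re, Complex.one_re, Complex.mul_re,
    Complex.mul_im, Complex.conj_re, Complex.conj_im, mul_one] at h
  nlinarith [h]

end CleanContext

section DiamondContext

variable {A : Type*} [CStarAlgebra A] [NormedAlgebra ℂ A] [StarModule ℂ A]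

/-- Bridge: even for the (possibly different) algebra structure coming from the extra
`NormedAlgebra ℂ A` instance, `ω` pulls out real scalars.  Proved by rational density. -/
lemma state_real_bridge (ω : A →L[ℂ] ℂ) (x : A) (r : ℝ) :
    ω (algebraMap ℂ A (r : ℂ) * x) = (r : ℂ) * ω x := by
  -- the additive map c ↦ ω (algebraMap c * x)
  let F : ℂ →+ ℂ :=
    { toFun := fun c => ω (algebraMap ℂ A c * x)
      map_zero' := by simp
      map_add' := fun c d => by
        show ω (algebraMap ℂ A (c + d) * x)
          = ω (algebraMap ℂ A c * x) + ω (algebraMap ℂ A d * x)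
        rw [map_add, add_mul, map_add] }
  have hF : ∀ c : ℂ, F c = ω (algebraMap ℂ A c * x) := fun _ => rfl
  have hF1 : F 1 = ω x := by rw [hF, map_one, one_mul]
  have ratcase : ∀ q : ℚ, F ((q : ℝ) : ℂ) = ((q : ℝ) : ℂ) * ω x := by
    intro q
    have hc : ((q : ℝ) : ℂ) = ((q : ℚ) : ℂ) := by push_cast; ring
    have h := map_ratCast_smul F ℂ ℂ q (1 : ℂ)
    rw [smul_eq_mul, smul_eq_mul, mul_one, hF1] at h
    rw [hc, h]
  -- continuity of both sides in `r`
  have lip : LipschitzWith (‖(1 : A)‖₊ * ‖x‖₊) (fun c : ℂ => algebraMap ℂ A c * x) := by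
    apply LipschitzWith.of_dist_le_mul
    intro c d
    rw [dist_eq_norm, dist_eq_norm, ← sub_mul, ← map_sub]
    calc ‖algebraMap ℂ A (c - d) * x‖ ≤ ‖algebraMap ℂ A (c - d)‖ * ‖x‖ := norm_mul_le _ _
      _ = ‖c - d‖ * ‖(1 : A)‖ * ‖x‖ := by rw [norm_algebraMap]
      _ = ↑(‖(1 : A)‖₊ * ‖x‖₊) * ‖c - d‖ := by push_cast; ring
  have cont1 : Continuous fun t : ℝ => F ((t : ℝ) : ℂ) := by
    have : Continuous fun t : ℝ => ω (algebraMap ℂ A ((t : ℝ) : ℂ) * x) :=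
      ω.continuous.comp (lip.continuous.comp Complex.continuous_ofReal)
    simpa only [hF] using this
  have cont2 : Continuous fun t : ℝ => ((t : ℝ) : ℂ) * ω x :=
    (Complex.continuous_ofReal).mul continuous_const
  have hdense := Rat.denseRange_cast (𝕜 := ℝ)
  have heq : (fun t : ℝ => F ((t : ℝ) : ℂ)) = fun t : ℝ => ((t : ℝ) : ℂ) * ω x := by
    refine hdense.equalizer cont1 cont2 (funext fun q => ?_)
    simpa using ratcase q
  have := congrFun heq r
  rw [hF] at this
  exact this

end DiamondContext

/-- If `ω` is a state on a unital C*-algebra, `U` a unitary and `s ∈ [0,1]`, then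
`s•U + (1-s)•1` lies in the Gelfand ideal of `ω` if and only if `ω U = -1` and `s = 1/2`. -/
theorem stmt_3 {𝔄 : Type*} [CStarAlgebra 𝔄] [NormedAlgebra ℂ 𝔄] [StarModule ℂ 𝔄]
    (ω : 𝔄 →L[ℂ] ℂ) (hω : IsState ω)
    (U : 𝔄) (hU₁ : star U * U = 1) (hU₂ : U * star U = 1) :
    ∀ s : ℝ, s ∈ Set.Icc (0 : ℝ) 1 →
      (ω (star ((s : ℂ) • U + ((1 : ℂ) - (s : ℂ)) • 1) *
          ((s : ℂ) • U + ((1 : ℂ) - (s : ℂ)) • 1)) = 0 ↔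
        ω U = -1 ∧ s = 1 / 2) := by
  obtain ⟨hpos, h1⟩ := hω
  intro s hs
  set z : ℂ := ω U with hzdef
  have hstar : ω (star U) = starRingEnd ℂ z := state_star ω hpos h1 U
  have hnorm : z.re ^ 2 + z.im ^ 2 ≤ 1 := state_normsq_le ω hpos h1 U hU₁
  -- star of algebraMap of a real number
  have hself : ∀ r : ℝ, star (algebraMap ℂ 𝔄 ((r : ℝ) : ℂ)) = algebraMap ℂ 𝔄 ((r : ℝ) : ℂ) := by
    intro r
    rw [← algebraMap_star_comm, Complex.star_def, Complex.conj_ofReal]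
  have comm : ∀ (c : ℂ) (y : 𝔄), y * algebraMap ℂ 𝔄 c = algebraMap ℂ 𝔄 c * y := fun c y =>
    (Algebra.commutes c y).symm
  -- the key computation
  have key : ω (star ((s : ℂ) • U + ((1 : ℂ) - (s : ℂ)) • 1) *
          ((s : ℂ) • U + ((1 : ℂ) - (s : ℂ)) • 1))
      = ((s ^ 2 + (1 - s) ^ 2 : ℝ) : ℂ) + ((s * (1 - s) : ℝ) : ℂ) * (starRingEnd ℂ z + z) := by
    have hc1 : ((1 : ℂ) - (s : ℂ)) = (((1 - s : ℝ)) : ℂ) := by push_cast; ring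
    rw [hc1, Algebra.smul_def, Algebra.smul_def]
    have e : star (algebraMap ℂ 𝔄 (s : ℂ) * U + algebraMap ℂ 𝔄 ((1 - s : ℝ) : ℂ) * 1) *
          (algebraMap ℂ 𝔄 (s : ℂ) * U + algebraMap ℂ 𝔄 ((1 - s : ℝ) : ℂ) * 1)
        = algebraMap ℂ 𝔄 (((s ^ 2 + (1 - s) ^ 2 : ℝ) : ℂ)) * 1
          + algebraMap ℂ 𝔄 (((s * (1 - s) : ℝ) : ℂ)) * star U
          + algebraMap ℂ 𝔄 (((s * (1 - s) : ℝ) : ℂ)) * U := by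
      rw [mul_one, star_add, star_mul, hself s, hself (1 - s)]
      rw [comm (s : ℂ) (star U)]
      have expand : ∀ (P Q R S : 𝔄), (P + Q) * (R + S) = P * R + P * S + Q * R + Q * S :=
        fun P Q R S => by noncomm_ring
      rw [expand]
      have t1 : algebraMap ℂ 𝔄 (s : ℂ) * star U * (algebraMap ℂ 𝔄 (s : ℂ) * U)
          = algebraMap ℂ 𝔄 (((s ^ 2 : ℝ)) : ℂ) := by
        calc algebraMap ℂ 𝔄 (s : ℂ) * star U * (algebraMap ℂ 𝔄 (s : ℂ) * U)
            = algebraMap ℂ 𝔄 (s : ℂ) * (star U * algebraMap ℂ 𝔄 (s : ℂ)) * U := by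
              noncomm_ring
          _ = algebraMap ℂ 𝔄 (s : ℂ) * (algebraMap ℂ 𝔄 (s : ℂ) * star U) * U := by
              rw [comm (s : ℂ) (star U)]
          _ = algebraMap ℂ 𝔄 (s : ℂ) * algebraMap ℂ 𝔄 (s : ℂ) * (star U * U) := by
              noncomm_ring
          _ = algebraMap ℂ 𝔄 (((s ^ 2 : ℝ)) : ℂ) := by
              rw [hU₁, mul_one, ← map_mul]; congr 1; push_cast; ring
      have t2 : algebraMap ℂ 𝔄 (s : ℂ) * star U * algebraMap ℂ 𝔄 ((1 - s : ℝ) : ℂ)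
          = algebraMap ℂ 𝔄 ((s * (1 - s) : ℝ) : ℂ) * star U := by
        rw [mul_assoc, comm ((1 - s : ℝ) : ℂ) (star U), ← mul_assoc, ← map_mul]
        congr 2; push_cast; ring
      have t3 : algebraMap ℂ 𝔄 ((1 - s : ℝ) : ℂ) * (algebraMap ℂ 𝔄 (s : ℂ) * U)
          = algebraMap ℂ 𝔄 ((s * (1 - s) : ℝ) : ℂ) * U := by
        rw [← mul_assoc, ← map_mul]; congr 2; push_cast; ring
      have t4 : algebraMap ℂ 𝔄 ((1 - s : ℝ) : ℂ) * algebraMap ℂ 𝔄 ((1 - s : ℝ) : ℂ)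
          = algebraMap ℂ 𝔄 (((1 - s) ^ 2 : ℝ) : ℂ) := by
        rw [← map_mul]; congr 1; push_cast; ring
      rw [t1, t2, t3, t4]
      rw [mul_one, show (((s ^ 2 + (1 - s) ^ 2 : ℝ)) : ℂ)
        = ((s ^ 2 : ℝ) : ℂ) + (((1 - s) ^ 2 : ℝ) : ℂ) by push_cast; ring, map_add]
      abel
    rw [e, map_add, map_add]
    rw [state_real_bridge ω 1 (s ^ 2 + (1 - s) ^ 2),
      state_real_bridge ω (star U) (s * (1 - s)),
      state_real_bridge ω U (s * (1 - s)), h1, hstar, ← hzdef]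
    ring
  rw [key]
  have hzconj : starRingEnd ℂ z + z = ((2 * z.re : ℝ) : ℂ) := by
    apply Complex.ext <;> simp [Complex.conj_re, Complex.conj_im] <;> ring
  rw [hzconj]
  have hcast : ((s ^ 2 + (1 - s) ^ 2 : ℝ) : ℂ) + ((s * (1 - s) : ℝ) : ℂ) * ((2 * z.re : ℝ) : ℂ)
      = ((s ^ 2 + (1 - s) ^ 2 + 2 * s * (1 - s) * z.re : ℝ) : ℂ) := by push_cast; ring
  rw [hcast, Complex.ofReal_eq_zero]
  obtain ⟨hs0, hs1⟩ := hs
  have h1s : (0 : ℝ) ≤ 1 - s := by linarith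
  have hre1 : -1 ≤ z.re := by nlinarith [sq_nonneg (z.re + 1), sq_nonneg z.im]
  constructor
  · intro h0
    have hs2 : s = 1 / 2 := by
      nlinarith [sq_nonneg (2 * s - 1),
        mul_nonneg (mul_nonneg hs0 h1s) (by linarith : (0:ℝ) ≤ z.re + 1)]
    subst hs2
    have hre : z.re = -1 := by nlinarith
    have him : z.im = 0 := by nlinarith [sq_nonneg z.im]
    exact ⟨Complex.ext (by simp [hre]) (by simp [him]), rfl⟩
  · rintro ⟨hz1, rfl⟩
    rw [show z = -1 from hz1]
    norm_num
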